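/- Let X and Y be complex Hilbert spaces, let A : Y → Y and B : X → X be bounded self-adjoint operators that are invertible, let E : X → Y be a bounded linear operator, and let λ ∈ ℂ be such that −λ ∉ σ(A) and −λ ∉ σ(B). Then ‖(λI + A)^{−1} ∘ E − E ∘ (λI + B)^{−1}‖ ≤ (1 + |λ| / dist(−λ, σ(A))) (1 + |λ| / dist(−λ, σ(B))) ‖A^{−1} ∘ E − E ∘ B^{−1}‖. -/

import Mathlib

open ContinuousLinearMap
open scoped ENNReal Pointwise

section Aux

variable {Y : Type*} [NormedAddCommGroup Y] [InnerProductSpace ℂ Y] [CompleteSpace Y]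

lemma isUnit_smul_one_add (A : Y →L[ℂ] Y) (lam : ℂ) (h : -lam ∉ spectrum ℂ A) :
    IsUnit (lam • (1 : Y →L[ℂ] Y) + A) := by
  have h1 := spectrum.notMem_iff.mp h
  have h2 : algebraMap ℂ (Y →L[ℂ] Y) (-lam) - A = -(lam • 1 + A) := by
    rw [Algebra.algebraMap_eq_smul_one, neg_smul, neg_add, sub_eq_add_neg]
  rw [h2, IsUnit.neg_iff] at h1
  exact h1

lemma norm_resolvent_le (A : Y →L[ℂ] Y) (hA : IsSelfAdjoint A) (lam : ℂ)
    (h : -lam ∉ spectrum ℂ A) [Nontrivial Y] :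
    ‖Ring.inverse (lam • (1 : Y →L[ℂ] Y) + A)‖
      ≤ 1 / Metric.infDist (-lam) (spectrum ℂ A) := by
  set d := Metric.infDist (-lam) (spectrum ℂ A) with hd_def
  have hd : 0 < d :=
    ((spectrum.isClosed A).notMem_iff_infDist_pos (spectrum.nonempty A)).mp h
  set M := lam • (1 : Y →L[ℂ] Y) + A with hM
  have hu : IsUnit M := isUnit_smul_one_add A lam h
  set u := hu.unit with hu_def
  have huval : (u : Y →L[ℂ] Y) = M := hu.unit_spec
  -- commutation : M is star-normal
  have hstar : star M = (starRingEnd ℂ lam) • (1 : Y →L[ℂ] Y) + A := by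
    rw [hM, star_add, star_smul, star_one, hA.star_eq]
    rfl
  have hcomm : Commute (star M) M := by
    rw [hstar, hM]
    have c1 : ∀ (r : ℂ) (x : Y →L[ℂ] Y), Commute (r • (1 : Y →L[ℂ] Y)) x :=
      fun r x => (Commute.one_left x).smul_left r
    have h1 : Commute ((starRingEnd ℂ) lam • (1 : Y →L[ℂ] Y)) (lam • (1 : Y →L[ℂ] Y) + A) :=
      c1 _ _
    have h2 : Commute A (lam • (1 : Y →L[ℂ] Y) + A) :=
      ((c1 lam A).symm).add_right (Commute.refl A)
    exact h1.add_left h2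
  -- star-normality of the inverse
  have hcomm' : Commute (star ((u⁻¹ : (Y →L[ℂ] Y)ˣ) : Y →L[ℂ] Y)) ((u⁻¹ : (Y →L[ℂ] Y)ˣ) : Y →L[ℂ] Y) := by
    have h1 : Commute ((star u : (Y →L[ℂ] Y)ˣ) : Y →L[ℂ] Y) (u : Y →L[ℂ] Y) := by
      rw [huval]; exact hcomm
    have h2 := (h1.units_inv_left).units_inv_right
    rwa [Units.coe_star_inv] at h2
  have hnormal : IsStarNormal ((u⁻¹ : (Y →L[ℂ] Y)ˣ) : Y →L[ℂ] Y) := ⟨hcomm'⟩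
  -- spectral radius bound
  have hspec : spectralRadius ℂ ((u⁻¹ : (Y →L[ℂ] Y)ˣ) : Y →L[ℂ] Y)
      ≤ ENNReal.ofReal (1 / d) := by
    rw [spectralRadius]
    refine iSup₂_le fun k hk => ?_
    rw [← spectrum.map_inv, Set.mem_inv] at hk
    rw [huval, hM] at hk
    have hk' : k⁻¹ ∈ ({lam} : Set ℂ) + spectrum ℂ A := by
      rwa [spectrum.singleton_add_eq, Algebra.algebraMap_eq_smul_one]
    obtain ⟨l, hl, mu, hmu, hsum⟩ := Set.mem_add.mp hk'
    rw [Set.mem_singleton_iff] at hl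
    rw [hl] at hsum
    have hdist : d ≤ ‖k⁻¹‖ := by
      rw [← hsum]
      have : ‖lam + mu‖ = dist (-lam) mu := by
        rw [dist_eq_norm]
        rw [show -lam - mu = -(lam + mu) by ring, norm_neg]
      rw [this]
      exact Metric.infDist_le_dist_of_mem hmu
    have hnorm : ‖k‖ ≤ 1 / d := by
      have hk0 : ‖k⁻¹‖⁻¹ ≤ d⁻¹ := inv_anti₀ hd hdist
      rwa [← norm_inv, inv_inv, ← one_div] at hk0
    calc (‖k‖₊ : ℝ≥0∞) = ENNReal.ofReal ‖k‖ := (ofReal_norm k).symm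
      _ ≤ ENNReal.ofReal (1 / d) := ENNReal.ofReal_le_ofReal hnorm
  rw [IsStarNormal.spectralRadius_eq_nnnorm] at hspec
  have : ENNReal.ofReal ‖((u⁻¹ : (Y →L[ℂ] Y)ˣ) : Y →L[ℂ] Y)‖ ≤ ENNReal.ofReal (1 / d) := by
    rw [ofReal_norm]; exact hspec
  have hfin := (ENNReal.ofReal_le_ofReal_iff (by positivity)).mp this
  have hRi : Ring.inverse M = ((u⁻¹ : (Y →L[ℂ] Y)ˣ) : Y →L[ℂ] Y) := by
    rw [← huval, Ring.inverse_unit]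
  rwa [hRi]

end Aux

theorem resolvent_difference_estimate
    {X Y : Type*} [NormedAddCommGroup X] [InnerProductSpace ℂ X] [CompleteSpace X]
    [NormedAddCommGroup Y] [InnerProductSpace ℂ Y] [CompleteSpace Y]
    (A : Y →L[ℂ] Y) (B : X →L[ℂ] X) (E : X →L[ℂ] Y)
    (hA : IsSelfAdjoint A) (hB : IsSelfAdjoint B)
    (hAu : IsUnit A) (hBu : IsUnit B) (lam : ℂ)
    (hlamA : -lam ∉ spectrum ℂ A) (hlamB : -lam ∉ spectrum ℂ B) :
    ‖(Ring.inverse (lam • ContinuousLinearMap.id ℂ Y + A)).comp E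
        - E.comp (Ring.inverse (lam • ContinuousLinearMap.id ℂ X + B))‖
      ≤ (1 + ‖lam‖ / Metric.infDist (-lam) (spectrum ℂ A))
          * (1 + ‖lam‖ / Metric.infDist (-lam) (spectrum ℂ B))
          * ‖(Ring.inverse A).comp E - E.comp (Ring.inverse B)‖ := by
  have hrhs_pos : ∀ z : X →L[ℂ] Y, (0:ℝ) ≤ (1 + ‖lam‖ / Metric.infDist (-lam) (spectrum ℂ A))
      * (1 + ‖lam‖ / Metric.infDist (-lam) (spectrum ℂ B)) * ‖z‖ := by
    intro z
    have h1 : (0:ℝ) ≤ ‖lam‖ / Metric.infDist (-lam) (spectrum ℂ A) :=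
      div_nonneg (norm_nonneg _) Metric.infDist_nonneg
    have h2 : (0:ℝ) ≤ ‖lam‖ / Metric.infDist (-lam) (spectrum ℂ B) :=
      div_nonneg (norm_nonneg _) Metric.infDist_nonneg
    positivity
  rcases subsingleton_or_nontrivial X with hX | hX
  · have : (Ring.inverse (lam • ContinuousLinearMap.id ℂ Y + A)).comp E
        - E.comp (Ring.inverse (lam • ContinuousLinearMap.id ℂ X + B)) = 0 := by
      ext x
      have : x = 0 := Subsingleton.elim x 0
      simp [this]
    rw [this, norm_zero]
    exact hrhs_pos _
  rcases subsingleton_or_nontrivial Y with hY | hY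
  · have : (Ring.inverse (lam • ContinuousLinearMap.id ℂ Y + A)).comp E
        - E.comp (Ring.inverse (lam • ContinuousLinearMap.id ℂ X + B)) = 0 := by
      ext x
      exact Subsingleton.elim _ _
    rw [this, norm_zero]
    exact hrhs_pos _
  -- Nontrivial case
  have hidY : ContinuousLinearMap.id ℂ Y = (1 : Y →L[ℂ] Y) := rfl
  have hidX : ContinuousLinearMap.id ℂ X = (1 : X →L[ℂ] X) := rfl
  rw [hidY, hidX]
  set MA := lam • (1 : Y →L[ℂ] Y) + A with hMA
  set MB := lam • (1 : X →L[ℂ] X) + B with hMB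
  have huA : IsUnit MA := isUnit_smul_one_add A lam hlamA
  have huB : IsUnit MB := isUnit_smul_one_add B lam hlamB
  set RA := Ring.inverse MA with hRA
  set RB := Ring.inverse MB with hRB
  set iA := Ring.inverse A with hiA
  set iB := Ring.inverse B with hiB
  set T := iA.comp E - E.comp iB with hT
  -- key operator identity
  have hRAMA : RA * MA = 1 := Ring.inverse_mul_cancel MA huA
  have hMARA : MA * RA = 1 := Ring.mul_inverse_cancel MA huA
  have hRBMB : RB * MB = 1 := Ring.inverse_mul_cancel MB huB
  have hMBRB : MB * RB = 1 := Ring.mul_inverse_cancel MB huB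
  have hAiA : A * iA = 1 := Ring.mul_inverse_cancel A hAu
  have hiBB : iB * B = 1 := Ring.inverse_mul_cancel B hBu
  have key : RA.comp E - E.comp RB = (RA * A).comp (T.comp ((B * RB) : X →L[ℂ] X)) := by
    have expand : (A : Y →L[ℂ] Y).comp (T.comp (B : X →L[ℂ] X))
        = E.comp B - A.comp E := by
      rw [hT]
      simp only [sub_comp, comp_sub, ← comp_assoc]
      rw [show (A : Y →L[ℂ] Y).comp iA = (1 : Y →L[ℂ] Y) from hAiA]
      simp only [one_def, id_comp, comp_assoc]
      rw [show (iB : X →L[ℂ] X).comp B = (1 : X →L[ℂ] X) from hiBB]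
      simp [one_def]
    have step : (RA * A).comp (T.comp ((B * RB) : X →L[ℂ] X))
        = RA.comp ((E.comp B - A.comp E).comp RB) := by
      rw [mul_def, mul_def, comp_assoc, ← expand]
      simp only [comp_assoc]
    rw [step]
    have hEB : E.comp B - A.comp E = E.comp MB - MA.comp E := by
      rw [hMB, hMA]
      simp only [comp_add, add_comp, comp_smul, smul_comp, comp_id, id_comp, one_def]
      abel
    rw [hEB]
    simp only [comp_sub, sub_comp, ← comp_assoc]
    rw [show (RA : Y →L[ℂ] Y).comp MA = (1 : Y →L[ℂ] Y) from hRAMA]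
    simp only [comp_assoc]
    rw [show (MB : X →L[ℂ] X).comp RB = (1 : X →L[ℂ] X) from hMBRB]
    simp [one_def]
  -- now norm estimates
  have hRAA : RA * A = 1 - lam • RA := by
    have : A = MA - lam • 1 := by rw [hMA]; abel
    rw [this, mul_sub, hRAMA]
    rw [mul_smul_comm, mul_one]
  have hBRB : B * RB = 1 - lam • RB := by
    have : B = MB - lam • 1 := by rw [hMB]; abel
    rw [this, sub_mul, hMBRB]
    rw [smul_mul_assoc, one_mul]
  have hdA : 0 < Metric.infDist (-lam) (spectrum ℂ A) :=
    ((spectrum.isClosed A).notMem_iff_infDist_pos (spectrum.nonempty A)).mp hlamA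
  have hdB : 0 < Metric.infDist (-lam) (spectrum ℂ B) :=
    ((spectrum.isClosed B).notMem_iff_infDist_pos (spectrum.nonempty B)).mp hlamB
  have hRAnorm : ‖RA‖ ≤ 1 / Metric.infDist (-lam) (spectrum ℂ A) :=
    norm_resolvent_le A hA lam hlamA
  have hRBnorm : ‖RB‖ ≤ 1 / Metric.infDist (-lam) (spectrum ℂ B) :=
    norm_resolvent_le B hB lam hlamB
  have hfacA : ‖RA * A‖ ≤ 1 + ‖lam‖ / Metric.infDist (-lam) (spectrum ℂ A) := by
    rw [hRAA]
    calc ‖(1 : Y →L[ℂ] Y) - lam • RA‖ ≤ ‖(1 : Y →L[ℂ] Y)‖ + ‖lam • RA‖ := norm_sub_le _ _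
      _ ≤ 1 + ‖lam‖ * ‖RA‖ := by
          rw [norm_smul]
          exact add_le_add norm_id_le le_rfl
      _ ≤ 1 + ‖lam‖ / Metric.infDist (-lam) (spectrum ℂ A) := by
          apply add_le_add le_rfl
          calc ‖lam‖ * ‖RA‖ ≤ ‖lam‖ * (1 / Metric.infDist (-lam) (spectrum ℂ A)) :=
                mul_le_mul_of_nonneg_left hRAnorm (norm_nonneg lam)
            _ = ‖lam‖ / Metric.infDist (-lam) (spectrum ℂ A) := mul_one_div _ _
  have hfacB : ‖B * RB‖ ≤ 1 + ‖lam‖ / Metric.infDist (-lam) (spectrum ℂ B) := by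
    rw [hBRB]
    calc ‖(1 : X →L[ℂ] X) - lam • RB‖ ≤ ‖(1 : X →L[ℂ] X)‖ + ‖lam • RB‖ := norm_sub_le _ _
      _ ≤ 1 + ‖lam‖ * ‖RB‖ := by
          rw [norm_smul]
          exact add_le_add norm_id_le le_rfl
      _ ≤ 1 + ‖lam‖ / Metric.infDist (-lam) (spectrum ℂ B) := by
          apply add_le_add le_rfl
          calc ‖lam‖ * ‖RB‖ ≤ ‖lam‖ * (1 / Metric.infDist (-lam) (spectrum ℂ B)) :=
                mul_le_mul_of_nonneg_left hRBnorm (norm_nonneg lam)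
            _ = ‖lam‖ / Metric.infDist (-lam) (spectrum ℂ B) := mul_one_div _ _
  rw [key]
  calc ‖(RA * A).comp (T.comp ((B * RB) : X →L[ℂ] X))‖
      ≤ ‖RA * A‖ * ‖T.comp ((B * RB) : X →L[ℂ] X)‖ := opNorm_comp_le _ _
    _ ≤ ‖RA * A‖ * (‖T‖ * ‖B * RB‖) := by
        apply mul_le_mul_of_nonneg_left (opNorm_comp_le _ _) (norm_nonneg _)
    _ ≤ (1 + ‖lam‖ / Metric.infDist (-lam) (spectrum ℂ A))
          * ((1 + ‖lam‖ / Metric.infDist (-lam) (spectrum ℂ B)) * ‖T‖) := by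
        apply mul_le_mul hfacA _ (by positivity) (by positivity)
        rw [mul_comm ‖T‖]
        exact mul_le_mul_of_nonneg_right hfacB (norm_nonneg _)
    _ = (1 + ‖lam‖ / Metric.infDist (-lam) (spectrum ℂ A))
          * (1 + ‖lam‖ / Metric.infDist (-lam) (spectrum ℂ B)) * ‖T‖ := by ring
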